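/- For a GMM with parameter vector μ = (μ_1,…,μ_n) and ψ̃_μ(x) = Σ_i ψ_i(x) μ_i, the projection of the KL-loss gradient onto μ satisfies ⟨∇L(μ), μ⟩ = Σ_i ⟨∇_{μ_i}L(μ), μ_i⟩ = E_{x∼N(0,I_d)}[‖ψ̃_μ(x)‖²]; in particular this projection is nonnegative. -/

import Mathlib

open MeasureTheory ProbabilityTheory Real Finset
open scoped RealInnerProductSpace BigOperators ENNReal NNReal

noncomputable def stdGaussian (d : ℕ) : Measure (EuclideanSpace ℝ (Fin d)) :=
  (Measure.pi fun _ : Fin d => gaussianReal 0 1).map ⇑(EuclideanSpace.equiv (Fin d) ℝ).symm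

noncomputable def gmmPsi {d n : ℕ} (w : Fin n → ℝ) (μ : Fin n → EuclideanSpace ℝ (Fin d))
    (i : Fin n) (x : EuclideanSpace ℝ (Fin d)) : ℝ :=
  w i * Real.exp (-‖x - μ i‖ ^ 2 / 2) / ∑ k, w k * Real.exp (-‖x - μ k‖ ^ 2 / 2)

noncomputable def psiTilde {d n : ℕ} (w : Fin n → ℝ) (μ : Fin n → EuclideanSpace ℝ (Fin d))
    (x : EuclideanSpace ℝ (Fin d)) : EuclideanSpace ℝ (Fin d) :=
  ∑ i, gmmPsi w μ i x • μ i

noncomputable def gmmPdf {d n : ℕ} (w : Fin n → ℝ) (μ : Fin n → EuclideanSpace ℝ (Fin d))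
    (x : EuclideanSpace ℝ (Fin d)) : ℝ :=
  ∑ i, w i * ((2 * Real.pi) ^ (-(d : ℝ) / 2) * Real.exp (-‖x - μ i‖ ^ 2 / 2))

noncomputable def gmmLoss {d n : ℕ} (w : Fin n → ℝ) (μ : Fin n → EuclideanSpace ℝ (Fin d)) : ℝ :=
  -∫ x, Real.log (gmmPdf w μ x / ((2 * Real.pi) ^ (-(d : ℝ) / 2) * Real.exp (-‖x‖ ^ 2 / 2)))
      ∂ stdGaussian d

noncomputable def gmmGrad {d n : ℕ} (w : Fin n → ℝ) (μ : Fin n → EuclideanSpace ℝ (Fin d))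
    (i : Fin n) : EuclideanSpace ℝ (Fin d) :=
  ∫ x, gmmPsi w μ i x • psiTilde w μ x ∂ stdGaussian d

instance (d : ℕ) : IsProbabilityMeasure (stdGaussian d) := by
  unfold _root_.stdGaussian
  exact Measure.isProbabilityMeasure_map
    ((EuclideanSpace.equiv (Fin d) ℝ).symm.continuous.measurable.aemeasurable)

section aux
variable {d n : ℕ} (w : Fin n → ℝ) (μ : Fin n → EuclideanSpace ℝ (Fin d))

lemma denom_pos (hw : ∀ i, 0 < w i) [Nonempty (Fin n)] (x : EuclideanSpace ℝ (Fin d)) :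
    0 < ∑ k, w k * Real.exp (-‖x - μ k‖ ^ 2 / 2) :=
  Finset.sum_pos (fun k _ => mul_pos (hw k) (Real.exp_pos _)) Finset.univ_nonempty

lemma psi_nonneg (hw : ∀ i, 0 < w i) (i : Fin n) (x : EuclideanSpace ℝ (Fin d)) :
    0 ≤ gmmPsi w μ i x := by
  have : Nonempty (Fin n) := ⟨i⟩
  exact div_nonneg (le_of_lt (mul_pos (hw i) (Real.exp_pos _))) (denom_pos w μ hw x).le

lemma psi_le_one (hw : ∀ i, 0 < w i) (i : Fin n) (x : EuclideanSpace ℝ (Fin d)) :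
    gmmPsi w μ i x ≤ 1 := by
  have : Nonempty (Fin n) := ⟨i⟩
  rw [gmmPsi, div_le_one (denom_pos w μ hw x)]
  exact Finset.single_le_sum (f := fun k => w k * Real.exp (-‖x - μ k‖ ^ 2 / 2))
    (fun k _ => (mul_pos (hw k) (Real.exp_pos _)).le) (Finset.mem_univ i)

lemma psi_continuous (hw : ∀ i, 0 < w i) (i : Fin n) :
    Continuous (gmmPsi w μ i) := by
  have : Nonempty (Fin n) := ⟨i⟩
  apply Continuous.div
  · fun_prop
  · fun_prop
  · exact fun x => (denom_pos w μ hw x).ne'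

lemma psiTilde_continuous (hw : ∀ i, 0 < w i) : Continuous (psiTilde w μ) := by
  unfold psiTilde
  exact continuous_finset_sum _ fun i _ => (psi_continuous w μ hw i).smul continuous_const

lemma psiTilde_bound (hw : ∀ i, 0 < w i) (x : EuclideanSpace ℝ (Fin d)) :
    ‖psiTilde w μ x‖ ≤ ∑ i, ‖μ i‖ := by
  refine (norm_sum_le _ _).trans (Finset.sum_le_sum fun i _ => ?_)
  rw [norm_smul]
  calc ‖gmmPsi w μ i x‖ * ‖μ i‖ ≤ 1 * ‖μ i‖ := by
        apply mul_le_mul_of_nonneg_right _ (norm_nonneg _)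
        rw [Real.norm_eq_abs, abs_of_nonneg (psi_nonneg w μ hw i x)]
        exact psi_le_one w μ hw i x
    _ = ‖μ i‖ := one_mul _

lemma integrand_integrable (hw : ∀ i, 0 < w i) (i : Fin n) :
    Integrable (fun x => gmmPsi w μ i x • psiTilde w μ x) (stdGaussian d) := by
  apply Integrable.mono' (g := fun _ => ∑ k, ‖μ k‖) (integrable_const _)
  · exact (((psi_continuous w μ hw i).smul (psiTilde_continuous w μ hw))).aestronglyMeasurable
  · filter_upwards with x
    rw [norm_smul, Real.norm_eq_abs, abs_of_nonneg (psi_nonneg w μ hw i x)]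
    calc gmmPsi w μ i x * ‖psiTilde w μ x‖ ≤ 1 * ‖psiTilde w μ x‖ :=
          mul_le_mul_of_nonneg_right (psi_le_one w μ hw i x) (norm_nonneg _)
      _ = ‖psiTilde w μ x‖ := one_mul _
      _ ≤ ∑ k, ‖μ k‖ := psiTilde_bound w μ hw x

end aux

/-- The projection of the KL-loss gradient onto `μ` equals `E[‖ψ̃_μ(x)‖²]`, hence is
nonnegative. -/
theorem gradient_projection {d n : ℕ} (w : Fin n → ℝ) (μ : Fin n → EuclideanSpace ℝ (Fin d))
    (hw : ∀ i, 0 < w i) (hsum : ∑ i, w i = 1) :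
    (∑ i, ⟪gmmGrad w μ i, μ i⟫) = ∫ x, ‖psiTilde w μ x‖ ^ 2 ∂ stdGaussian d
      ∧ 0 ≤ ∑ i, ⟪gmmGrad w μ i, μ i⟫ := by
  have key : (∑ i, ⟪gmmGrad w μ i, μ i⟫) = ∫ x, ‖psiTilde w μ x‖ ^ 2 ∂ stdGaussian d := by
    have h1 : ∀ i : Fin n, ⟪gmmGrad w μ i, μ i⟫
        = ∫ x, ⟪μ i, gmmPsi w μ i x • psiTilde w μ x⟫ ∂ stdGaussian d := by
      intro i
      rw [gmmGrad, real_inner_comm]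
      exact (integral_inner (integrand_integrable w μ hw i) (μ i)).symm
    simp_rw [h1]
    rw [← integral_finset_sum]
    · apply integral_congr_ae
      filter_upwards with x
      simp_rw [real_inner_smul_right]
      have e : ⟪(∑ i, gmmPsi w μ i x • μ i : EuclideanSpace ℝ (Fin d)),
            (∑ i, gmmPsi w μ i x • μ i : EuclideanSpace ℝ (Fin d))⟫
          = ∑ i, ⟪gmmPsi w μ i x • μ i,
            (∑ i, gmmPsi w μ i x • μ i : EuclideanSpace ℝ (Fin d))⟫ := sum_inner _ _ _
      rw [← real_inner_self_eq_norm_sq, show (psiTilde w μ x : EuclideanSpace ℝ (Fin d))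
        = ∑ i, gmmPsi w μ i x • μ i from rfl]
      rw [e]
      exact Finset.sum_congr rfl fun i _ => (real_inner_smul_left _ _ _).symm
    · intro i _
      exact ((integrand_integrable w μ hw i).const_inner (μ i))
  refine ⟨key, key ▸ integral_nonneg fun x => by positivity⟩
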